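/- Every nonzero element of ker_ℤ(A) has some Graver basis element below it: if z ∈ ℤ^n, z ≠ 0 and Az = 0, then there exists g ∈ G(A) with g ⊑ z. -/
import Mathlib


/-- The conformal partial order on integer vectors. -/
def Conf {ι : Type*} (x y : ι → ℤ) : Prop :=
  ∀ i, |x i| ≤ |y i| ∧ 0 ≤ x i * y i

/-- The Graver basis of an integer matrix `A`. -/
def graverBasis {κ ι : Type*} [Fintype ι] (A : Matrix κ ι ℤ) : Set (ι → ℤ) :=
  {g | A.mulVec g = 0 ∧ g ≠ 0 ∧
    ∀ y : ι → ℤ, A.mulVec y = 0 → y ≠ 0 → Conf y g → y = g}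

lemma conf_refl {ι : Type*} (z : ι → ℤ) : Conf z z :=
  fun i => ⟨le_refl _, mul_self_nonneg _⟩

lemma conf_trans {ι : Type*} {x y z : ι → ℤ} (hxy : Conf x y) (hyz : Conf y z) :
    Conf x z := by
  intro i
  obtain ⟨h1, h2⟩ := hxy i
  obtain ⟨h3, h4⟩ := hyz i
  refine ⟨h1.trans h3, ?_⟩
  rcases eq_or_ne (x i) 0 with hx | hx
  · simp [hx]
  · have hy : y i ≠ 0 := by
      intro h; rw [h] at h1; simp [abs_nonpos_iff] at h1; exact hx h1
    nlinarith [mul_pos (abs_pos.mpr hy) (abs_pos.mpr hy), sq_abs (y i),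
      mul_nonneg h2 h4, sq_nonneg (y i)]

lemma conf_strict {ι : Type*} [Fintype ι] {y z : ι → ℤ} (h : Conf y z) (hne : y ≠ z) :
    ∑ i, (y i).natAbs < ∑ i, (z i).natAbs := by
  obtain ⟨j, hj⟩ := Function.ne_iff.mp hne
  refine Finset.sum_lt_sum (fun i _ => ?_) ⟨j, Finset.mem_univ j, ?_⟩
  · have := (h i).1
    rw [Int.abs_eq_natAbs, Int.abs_eq_natAbs] at this
    exact_mod_cast this
  · obtain ⟨h1, h2⟩ := h j
    rcases lt_or_eq_of_le h1 with hlt | heq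
    · rw [Int.abs_eq_natAbs, Int.abs_eq_natAbs] at hlt
      exact_mod_cast hlt
    · exfalso
      have : y j = z j ∨ y j = -z j := abs_eq_abs.mp heq
      rcases this with h' | h'
      · exact hj h'
      · have hz : z j ≠ 0 := by
          intro h0; apply hj; rw [h', h0]; simp [h0]
        rw [h'] at h2
        nlinarith [mul_pos (abs_pos.mpr hz) (abs_pos.mpr hz), sq_abs (z j)]

/-- Every nonzero element of `ker_ℤ(A)` has some Graver basis element below it. -/
theorem exists_graver_below (m n : ℕ) (A : Matrix (Fin m) (Fin n) ℤ)
    (z : Fin n → ℤ) (hz : z ≠ 0) (hAz : A.mulVec z = 0) :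
    ∃ g ∈ graverBasis A, Conf g z := by
  classical
  generalize hN : ∑ i, (z i).natAbs = N
  induction N using Nat.strong_induction_on generalizing z with
  | _ N ih =>
    by_cases hmin : ∀ y : Fin n → ℤ, A.mulVec y = 0 → y ≠ 0 → Conf y z → y = z
    · exact ⟨z, ⟨hAz, hz, hmin⟩, conf_refl z⟩
    · push_neg at hmin
      obtain ⟨y, hAy, hy0, hconf, hne⟩ := hmin
      obtain ⟨g, hg, hgy⟩ := ih (∑ i, (y i).natAbs)
        (hN ▸ conf_strict hconf hne) y hy0 hAy rfl
      exact ⟨g, hg, conf_trans hgy hconf⟩
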